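/- For a real number m ≥ 3 that is an integer, the sum over i from 2 to m-1 of (⌊log₂ i⌋ + ⌊log₂(i-1)⌋) equals 2·(sum over i from 2 to m-1 of ⌊log₂ i⌋) - ⌊log₂(m-1)⌋, and this equals (2m-1)·⌊log₂(m-1)⌋ - 2^(⌊log₂(m-1)⌋+2) + 4. -/

import Mathlib

open Finset

lemma floorlog (n : ℕ) : ⌊Real.logb 2 (n : ℝ)⌋ = (Nat.log 2 n : ℤ) := by
  rw [show ((2:ℝ)) = ((2:ℕ):ℝ) by norm_num,
    Real.floor_logb_natCast (Nat.cast_nonneg n), Int.log_natCast]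

lemma sumlog : ∀ n : ℕ, 1 ≤ n →
    (∑ i ∈ Finset.Icc 1 n, (Nat.log 2 i : ℤ)) =
      (n + 1) * (Nat.log 2 n : ℤ) - 2 ^ (Nat.log 2 n + 1) + 2 := by
  intro n hn
  induction n with
  | zero => omega
  | succ k ih =>
    rcases Nat.eq_or_lt_of_le hn with h1 | h1
    · simp [← h1]
    · have hk : 1 ≤ k := by omega
      rw [Finset.sum_Icc_succ_top (by omega), ih hk]
      rcases Nat.lt_or_ge (k + 1) (2 ^ (Nat.log 2 k + 1)) with h | h
      · have hlog : Nat.log 2 (k + 1) = Nat.log 2 k := by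
          have h2 : 2 ^ Nat.log 2 k ≤ k := Nat.pow_log_le_self 2 (by omega)
          exact Nat.log_eq_of_pow_le_of_lt_pow (le_trans h2 (Nat.le_succ k)) h
        rw [hlog]; push_cast; ring
      · have h2 : k < 2 ^ (Nat.log 2 k + 1) := Nat.lt_pow_succ_log_self (by omega) k
        have hke : k + 1 = 2 ^ (Nat.log 2 k + 1) := by omega
        have hlog : Nat.log 2 (k + 1) = Nat.log 2 k + 1 := by
          rw [hke, Nat.log_pow (by omega)]
        have hkz : (k : ℤ) + 1 = 2 ^ (Nat.log 2 k + 1) := by exact_mod_cast congrArg (Nat.cast (R := ℤ)) hke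
        rw [hlog]
        push_cast
        linear_combination -hkz

theorem stmt17 (m : ℕ) (hm : 3 ≤ m) :
    (∑ i ∈ Finset.Icc 2 (m - 1),
        (⌊Real.logb 2 (i : ℝ)⌋ + ⌊Real.logb 2 ((i : ℝ) - 1)⌋)) =
      2 * (∑ i ∈ Finset.Icc 2 (m - 1), ⌊Real.logb 2 (i : ℝ)⌋) -
        ⌊Real.logb 2 ((m : ℝ) - 1)⌋ ∧
    (∑ i ∈ Finset.Icc 2 (m - 1),
        (⌊Real.logb 2 (i : ℝ)⌋ + ⌊Real.logb 2 ((i : ℝ) - 1)⌋)) =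
      (2 * (m : ℤ) - 1) * ⌊Real.logb 2 ((m : ℝ) - 1)⌋ -
        2 ^ ((⌊Real.logb 2 ((m : ℝ) - 1)⌋ + 2).toNat) + 4 := by
  set n := m - 1 with hn
  have hn2 : 2 ≤ n := by omega
  have hmn : (m : ℝ) - 1 = (n : ℝ) := by
    have : m = n + 1 := by omega
    rw [this]; push_cast; ring
  -- rewrite all floors as Nat.log
  have hfl : ∀ i ∈ Finset.Icc 2 n, ⌊Real.logb 2 ((i : ℕ) : ℝ)⌋ = (Nat.log 2 i : ℤ) :=
    fun i _ => floorlog i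
  have hfl' : ∀ i ∈ Finset.Icc 2 n, ⌊Real.logb 2 (((i : ℕ) : ℝ) - 1)⌋ = (Nat.log 2 (i - 1) : ℤ) := by
    intro i hi
    simp only [Finset.mem_Icc] at hi
    have : ((i : ℝ) - 1) = ((i - 1 : ℕ) : ℝ) := by
      have : i = (i - 1) + 1 := by omega
      rw [this]; push_cast; ring
    rw [this, floorlog]
  rw [hmn, floorlog,
    Finset.sum_congr rfl (fun i hi => by rw [hfl i hi, hfl' i hi]),
    Finset.sum_congr rfl hfl]
  -- sums over Icc 2 n vs Icc 1 n : log 1 = 0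
  have hS1 : (∑ i ∈ Finset.Icc 2 n, (Nat.log 2 i : ℤ)) =
      ∑ i ∈ Finset.Icc 1 n, (Nat.log 2 i : ℤ) := by
    rw [show Finset.Icc 1 n = insert 1 (Finset.Icc 2 n) by
      ext x; simp [Finset.mem_Icc, Finset.mem_insert]; omega]
    simp
  have hS2 : (∑ i ∈ Finset.Icc 2 n, (Nat.log 2 (i - 1) : ℤ)) =
      ∑ i ∈ Finset.Icc 1 (n - 1), (Nat.log 2 i : ℤ) := by
    rw [show Finset.Icc 2 n = Finset.map (addRightEmbedding 1) (Finset.Icc 1 (n - 1)) by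
        rw [Finset.map_add_right_Icc]; congr 1; omega,
      Finset.sum_map]
    simp [addRightEmbedding_apply]
  have hsplit : (∑ i ∈ Finset.Icc 1 n, (Nat.log 2 i : ℤ)) =
      (∑ i ∈ Finset.Icc 1 (n - 1), (Nat.log 2 i : ℤ)) + (Nat.log 2 n : ℤ) := by
    have : n = (n - 1) + 1 := by omega
    rw [this, Finset.sum_Icc_succ_top (by omega)]
    rw [← this]
  rw [Finset.sum_add_distrib, hS1, hS2]
  constructor
  · rw [hsplit]; ring
  · have key := sumlog n (by omega)
    have hmz : (m : ℤ) = (n : ℤ) + 1 := by omega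
    have htn : ((Nat.log 2 n : ℤ) + 2).toNat = Nat.log 2 n + 2 := by omega
    rw [htn]
    push_cast at key
    linear_combination (-1 : ℤ) * hsplit + 2 * key - 2 * (Nat.log 2 n : ℤ) * hmz
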